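/- Let G be a group with a finite generating set S such that the word metric d_S on G is δ-hyperbolic, and let K ≥ 1, C ≥ 0. Then there exist K' ≥ 1 and C' ≥ 0, depending only on δ, K, C, with the following property. Let H₁ ≤ H₂ ≤ G be subgroups, let (T₁,d₁) and (T₂,d₂) be ℝ-trees with basepoints t₁ ∈ T₁, t₂ ∈ T₂, equipped with free actions of H₁ and H₂ respectively by isometries, and let f₁ : T₁ → (G,d_S) and f₂ : T₂ → (G,d_S) be, respectively, an H₁-equivariant and an H₂-equivariant (K,C)-quasi-isometric embedding with f₁(t₁) = 1 and f₂(t₂) = 1. Assume that every point of T₁ lies on a geodesic segment between two points of the orbit H₁·t₁. Then there exists an H₁-equivariant (K',C')-quasi-isometric embedding ψ : T₁ → T₂, where H₁ acts on T₂ via the inclusion H₁ ≤ H₂. -/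

import Mathlib

/-- Word length of `g` with respect to a generating set `S`: the least `n` such that `g`
is a product of `n` elements of `S ∪ S⁻¹`. -/
noncomputable def wordLength {G : Type*} [Group G] (S : Set G) (g : G) : ℕ :=
  sInf {n | ∃ l : List G, l.length = n ∧ (∀ x ∈ l, x ∈ S ∪ S⁻¹) ∧ l.prod = g}

/-- Word metric on `G` with respect to `S`. -/
noncomputable def wordDist {G : Type*} [Group G] (S : Set G) (g h : G) : ℝ :=
  (wordLength S (g⁻¹ * h) : ℝ)

/-- Gromov's four-point condition for a distance function: `(X, d)` is `δ`-hyperbolic. -/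
def IsHyperbolic {X : Type*} (d : X → X → ℝ) (δ : ℝ) : Prop :=
  ∀ x y z w : X, d x y + d z w ≤ max (d x z + d y w) (d x w + d y z) + 2 * δ

/-- `f` is a `(K, C)`-quasi-isometric embedding with respect to given distance functions. -/
def IsQIE {X Y : Type*} (dX : X → X → ℝ) (dY : Y → Y → ℝ) (f : X → Y) (K C : ℝ) : Prop :=
  ∀ x x' : X, (1 / K) * dX x x' - C ≤ dY (f x) (f x') ∧ dY (f x) (f x') ≤ K * dX x x' + C

/-- `H` is a quasiconvex free subgroup of rank `r` of `G` with respect to `S`: there is an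
isomorphism from the free group of rank `r` onto `H` which is a quasi-isometric embedding
from the word metric of a free basis to the word metric of `S`. -/
def IsQCFreeOfRank {G : Type*} [Group G] (S : Set G) (r : ℕ) (H : Subgroup G) : Prop :=
  ∃ K C : ℝ, 1 ≤ K ∧ 0 ≤ C ∧ ∃ φ : FreeGroup (Fin r) ≃* H,
    IsQIE (wordDist (Set.range (FreeGroup.of : Fin r → FreeGroup (Fin r))))
      (wordDist S) (fun w => ((φ w : H) : G)) K C

/-- A geodesic metric space: any two points are joined by a geodesic segment. -/
def IsGeodesicSpace (X : Type*) [MetricSpace X] : Prop :=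
  ∀ x y : X, ∃ γ : ℝ → X, γ 0 = x ∧ γ (dist x y) = y ∧
    ∀ s t : ℝ, s ∈ Set.Icc (0 : ℝ) (dist x y) → t ∈ Set.Icc (0 : ℝ) (dist x y) →
      dist (γ s) (γ t) = |s - t|

/-- An ℝ-tree: a geodesic metric space which is 0-hyperbolic. -/
def IsRTree (T : Type*) [MetricSpace T] : Prop :=
  IsGeodesicSpace T ∧ IsHyperbolic (fun x y : T => dist x y) 0

/-- `γ` is a geodesic segment from `x` to `y`, parametrized on `[0, dist x y]`. -/
def IsGeodesicSegment {T : Type*} [MetricSpace T] (γ : ℝ → T) (x y : T) : Prop :=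
  γ 0 = x ∧ γ (dist x y) = y ∧
    ∀ s t : ℝ, s ∈ Set.Icc (0 : ℝ) (dist x y) → t ∈ Set.Icc (0 : ℝ) (dist x y) →
      dist (γ s) (γ t) = |s - t|

/-- The point `x` lies on some geodesic segment between two points of the orbit of `t₀`
under the action `a` of `H`. -/
def LiesOnOrbitGeodesic {T : Type*} [MetricSpace T] {H : Type*} [Group H]
    (a : H →* (T ≃ᵢ T)) (t₀ x : T) : Prop :=
  ∃ (g g' : H) (γ : ℝ → T), IsGeodesicSegment γ (a g t₀) (a g' t₀) ∧
    ∃ s ∈ Set.Icc (0 : ℝ) (dist (a g t₀) (a g' t₀)), γ s = x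

section WM
variable {G : Type*} [Group G] {S : Set G} (hgen : Subgroup.closure S = ⊤)
include hgen

lemma wl_set_nonempty (g : G) :
    {n | ∃ l : List G, l.length = n ∧ (∀ x ∈ l, x ∈ S ∪ S⁻¹) ∧ l.prod = g}.Nonempty := by
  have hg : g ∈ Submonoid.closure (S ∪ S⁻¹) := by
    rw [← Subgroup.closure_toSubmonoid]
    simp [hgen]
  obtain ⟨l, hl, hp⟩ := Submonoid.exists_list_of_mem_closure hg
  exact ⟨l.length, l, rfl, hl, hp⟩

lemma wl_spec (g : G) : ∃ l : List G, l.length = wordLength S g ∧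
    (∀ x ∈ l, x ∈ S ∪ S⁻¹) ∧ l.prod = g :=
  Nat.sInf_mem (wl_set_nonempty hgen g)

omit hgen in
lemma wl_le {g : G} {l : List G} (hl : ∀ x ∈ l, x ∈ S ∪ S⁻¹) (hp : l.prod = g) :
    wordLength S g ≤ l.length :=
  Nat.sInf_le ⟨l, rfl, hl, hp⟩

omit hgen in
lemma wl_one : wordLength S (1 : G) = 0 :=
  Nat.le_zero.1 (wl_le (g := 1) (l := []) (by simp) List.prod_nil)

lemma wl_mul_le (g h : G) :
    wordLength S (g * h) ≤ wordLength S g + wordLength S h := by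
  obtain ⟨l, hlen, hmem, hprod⟩ := wl_spec hgen g
  obtain ⟨m, mlen, mmem, mprod⟩ := wl_spec hgen h
  have := wl_le (g := g * h) (l := l ++ m) (by
    intro x hx; rcases List.mem_append.1 hx with h' | h'
    exacts [hmem x h', mmem x h']) (by simp [hprod, mprod])
  simpa [hlen, mlen] using this

lemma wl_inv_le (g : G) : wordLength S g⁻¹ ≤ wordLength S g := by
  obtain ⟨l, hlen, hmem, hprod⟩ := wl_spec hgen g
  have := wl_le (g := g⁻¹) (l := (l.map fun x => x⁻¹).reverse) (by
    intro x hx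
    simp only [List.mem_reverse, List.mem_map] at hx
    obtain ⟨y, hy, rfl⟩ := hx
    rcases hmem y hy with h' | h'
    · exact Or.inr (by simpa using h')
    · exact Or.inl (by simpa using h')) (by
      rw [← List.prod_inv_reverse, hprod])
  simpa [hlen] using this

lemma wl_inv (g : G) : wordLength S g⁻¹ = wordLength S g :=
  le_antisymm (wl_inv_le hgen g) (by simpa using wl_inv_le hgen g⁻¹)

omit hgen in
lemma wd_self (g : G) : wordDist S g g = 0 := by simp [wordDist, wl_one]

lemma wd_symm (g h : G) : wordDist S g h = wordDist S h g := by
  unfold wordDist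
  rw [show h⁻¹ * g = (g⁻¹ * h)⁻¹ by group, wl_inv hgen]

lemma wd_tri (g k h : G) : wordDist S g h ≤ wordDist S g k + wordDist S k h := by
  unfold wordDist
  rw [show g⁻¹ * h = (g⁻¹ * k) * (k⁻¹ * h) by group]
  exact_mod_cast wl_mul_le hgen _ _

omit hgen in
lemma wd_nonneg (g h : G) : 0 ≤ wordDist S g h := by
  unfold wordDist; positivity

omit hgen in
lemma wd_left_inv (k g h : G) : wordDist S (k * g) (k * h) = wordDist S g h := by
  unfold wordDist
  congr 2
  group

omit hgen in
lemma wd_nat (g h : G) : ∃ n : ℕ, wordDist S g h = n := ⟨_, rfl⟩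

/-- Discrete geodesics in the word metric. -/
lemma wd_geod (g h : G) : ∃ (n : ℕ) (c : ℕ → G), c 0 = g ∧ c n = h ∧
    (n : ℝ) = wordDist S g h ∧
    ∀ i ≤ n, ∀ j ≤ n, wordDist S (c i) (c j) = |(i : ℝ) - (j : ℝ)| := by
  obtain ⟨l, hlen, hmem, hprod⟩ := wl_spec hgen (g⁻¹ * h)
  set n := wordLength S (g⁻¹ * h) with hn
  refine ⟨n, fun i => g * (l.take i).prod, by simp, ?_, rfl, ?_⟩
  · show g * (l.take n).prod = h
    rw [← hlen, List.take_length, hprod]; group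
  · -- key: for i ≤ j ≤ n, wordLength S ((c i)⁻¹ * c j) = j - i
    have key : ∀ i j, i ≤ j → j ≤ n → wordLength S ((g * (l.take i).prod)⁻¹ * (g * (l.take j).prod)) = j - i := by
      intro i j hij hj
      have hval : (g * (l.take i).prod)⁻¹ * (g * (l.take j).prod) = ((l.take j).drop i).prod := by
        have h1 : List.take i (List.take j l) = List.take i l := by
          rw [List.take_take, min_eq_left hij]
        have hsp2 : (l.take i).prod * ((l.take j).drop i).prod = (l.take j).prod := by
          rw [← h1, ← List.prod_append, List.take_append_drop]
        rw [← hsp2]; group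
      have hsub : ∀ x ∈ (l.take j).drop i, x ∈ S ∪ S⁻¹ := fun x hx =>
        hmem x (List.take_subset _ _ (List.drop_subset _ _ hx))
      have hlen2 : ((l.take j).drop i).length = j - i := by
        rw [List.length_drop, List.length_take, min_eq_left (hlen ▸ hj)]
      have hle : wordLength S ((g * (l.take i).prod)⁻¹ * (g * (l.take j).prod)) ≤ j - i := by
        rw [hval]; exact hlen2 ▸ wl_le hsub rfl
      -- lower bound: triangle
      have h1 : wordLength S (g⁻¹ * (g * (l.take i).prod)) ≤ i := by
        have : (g⁻¹ * (g * (l.take i).prod)) = (l.take i).prod := by group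
        rw [this]
        calc wordLength S (l.take i).prod ≤ (l.take i).length :=
              wl_le (fun x hx => hmem x (List.take_subset _ _ hx)) rfl
          _ ≤ i := by rw [List.length_take]; exact min_le_left _ _
      have h2 : wordLength S ((g * (l.take j).prod)⁻¹ * h) ≤ n - j := by
        have hval2 : (g * (l.take j).prod)⁻¹ * h = (l.drop j).prod := by
          have hsp : (l.take j).prod * (l.drop j).prod = l.prod := by
            rw [← List.prod_append, List.take_append_drop]
          calc (g * (l.take j).prod)⁻¹ * h
              = (l.take j).prod⁻¹ * (g⁻¹ * h) := by group
            _ = (l.take j).prod⁻¹ * l.prod := by rw [hprod]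
            _ = (l.drop j).prod := by rw [← hsp]; group
        rw [hval2]
        calc wordLength S (l.drop j).prod ≤ (l.drop j).length :=
              wl_le (fun x hx => hmem x (List.drop_subset _ _ hx)) rfl
          _ = n - j := by rw [List.length_drop, hlen]
      have htri : n ≤ i + (wordLength S ((g * (l.take i).prod)⁻¹ * (g * (l.take j).prod)) + (n - j)) := by
        calc n = wordLength S (g⁻¹ * h) := hn
          _ ≤ wordLength S (g⁻¹ * (g * (l.take i).prod)) +
              wordLength S ((g * (l.take i).prod)⁻¹ * h) := by
              have := wl_mul_le hgen (g⁻¹ * (g * (l.take i).prod)) ((g * (l.take i).prod)⁻¹ * h)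
              rw [show (g⁻¹ * (g * (l.take i).prod)) * ((g * (l.take i).prod)⁻¹ * h) = g⁻¹ * h by group] at this
              exact this
          _ ≤ i + wordLength S ((g * (l.take i).prod)⁻¹ * h) := by gcongr
          _ ≤ i + (wordLength S ((g * (l.take i).prod)⁻¹ * (g * (l.take j).prod)) +
                wordLength S ((g * (l.take j).prod)⁻¹ * h)) := by
              gcongr
              have := wl_mul_le hgen ((g * (l.take i).prod)⁻¹ * (g * (l.take j).prod)) ((g * (l.take j).prod)⁻¹ * h)
              rw [show ((g * (l.take i).prod)⁻¹ * (g * (l.take j).prod)) * ((g * (l.take j).prod)⁻¹ * h) = (g * (l.take i).prod)⁻¹ * h by group] at this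
              exact this
          _ ≤ i + (wordLength S ((g * (l.take i).prod)⁻¹ * (g * (l.take j).prod)) + (n - j)) := by gcongr
      omega
    intro i hi j hj
    rcases le_total i j with hij | hij
    · have := key i j hij hj
      unfold wordDist
      rw [this]
      have : (i:ℝ) ≤ j := by exact_mod_cast hij
      rw [abs_sub_comm, abs_of_nonneg (by linarith)]
      push_cast [Nat.cast_sub hij]
      ring_nf
    · have := key j i hij hi
      rw [wd_symm hgen]
      unfold wordDist
      rw [this]
      have : (j:ℝ) ≤ i := by exact_mod_cast hij
      rw [abs_of_nonneg (by linarith)]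
      push_cast [Nat.cast_sub hij]
      ring_nf

end WM



/-- Numeric helper: bound on `clog` via square root. -/
lemma clog_le_sqrt {n : ℕ} (hn : 2 ≤ n) {MM : ℝ} (hMM : (n : ℝ) ≤ MM) :
    (Nat.clog 2 n : ℝ) ≤ 4 * Real.sqrt MM + 1 := by
  have hMM0 : (0:ℝ) < MM := lt_of_lt_of_le (by exact_mod_cast (by omega : 0 < n) : (0:ℝ) < n) hMM
  set m := Nat.clog 2 n - 1 with hm
  have hpow : 2 ^ m < n := Nat.pow_pred_clog_lt_self (by norm_num) (by omega)
  have hclog : Nat.clog 2 n = m + 1 := by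
    have := Nat.clog_pos (b := 2) (by norm_num) hn
    omega
  have hpowR : (2:ℝ) ^ m < MM := by
    calc (2:ℝ) ^ m = ((2 ^ m : ℕ) : ℝ) := by push_cast; ring
      _ < n := by exact_mod_cast hpow
      _ ≤ MM := hMM
  have hlog : (m : ℝ) * Real.log 2 ≤ Real.log MM := by
    calc (m : ℝ) * Real.log 2 = Real.log ((2:ℝ) ^ m) := by rw [Real.log_pow]
      _ ≤ Real.log MM := Real.log_le_log (by positivity) hpowR.le
  have hlogMM : Real.log MM ≤ 2 * Real.sqrt MM := by
    have h1 : Real.log (Real.sqrt MM) ≤ Real.sqrt MM - 1 :=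
      Real.log_le_sub_one_of_pos (Real.sqrt_pos.2 hMM0)
    have h2 : Real.log (Real.sqrt MM) = Real.log MM / 2 := Real.log_sqrt hMM0.le
    linarith
  have hlog2 : (1:ℝ)/2 ≤ Real.log 2 := by
    have := Real.log_two_gt_d9
    linarith
  have hm4 : (m:ℝ) ≤ 4 * Real.sqrt MM := by
    have hmn : (m:ℝ) * (1/2) ≤ (m:ℝ) * Real.log 2 := by
      apply mul_le_mul_of_nonneg_left hlog2 (by positivity)
    linarith
  rw [hclog]
  push_cast
  linarith

/-- Numeric helper: solving `D ≤ E √(A D + B) + F` for `D`. -/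
lemma solve_sqrt_ineq {D E A B F : ℝ} (hD : 0 ≤ D) (hE : 0 ≤ E) (hA : 0 ≤ A) (hB : 0 ≤ B)
    (hF : 1 ≤ F) (h : D ≤ E * Real.sqrt (A * D + B) + F) :
    D ≤ 1 + 2 * F + E ^ 2 * (A + B) := by
  by_contra hcon
  push_neg at hcon
  have hD1 : 1 ≤ D := by nlinarith [sq_nonneg E]
  have hDF : F ≤ D := by nlinarith [sq_nonneg E]
  have hsq : (D - F) ^ 2 ≤ E ^ 2 * (A * D + B) := by
    have h1 : D - F ≤ E * Real.sqrt (A * D + B) := by linarith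
    have h2 : (E * Real.sqrt (A * D + B)) ^ 2 = E ^ 2 * (A * D + B) := by
      rw [mul_pow, Real.sq_sqrt (by nlinarith)]
    nlinarith [Real.sqrt_nonneg (A * D + B), sq_nonneg (D - F)]
  have hstep : A * D + B ≤ (A + B) * D := by nlinarith
  have hlin : (D - F) ^ 2 ≤ E ^ 2 * (A + B) * D := by
    calc (D - F) ^ 2 ≤ E ^ 2 * (A * D + B) := hsq
      _ ≤ E ^ 2 * ((A + B) * D) := by
          apply mul_le_mul_of_nonneg_left hstep (by positivity)
      _ = E ^ 2 * (A + B) * D := by ring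
  nlinarith [sq_nonneg F]

/-- A coarse space: symmetric, reflexive, triangle, ℕ-valued, with discrete geodesics. -/
structure CSP (X : Type*) where
  d : X → X → ℝ
  symm : ∀ x y, d x y = d y x
  tri : ∀ x y z, d x z ≤ d x y + d y z
  self : ∀ x, d x x = 0
  nat : ∀ x y, ∃ n : ℕ, d x y = n
  geo : ∀ x y : X, ∃ (n : ℕ) (c : ℕ → X), c 0 = x ∧ c n = y ∧
      ∀ i ≤ n, ∀ j ≤ n, d (c i) (c j) = |(i : ℝ) - (j : ℝ)|

namespace CSP

variable {X : Type*} (M : CSP X)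

/-- Discrete geodesic predicate. -/
def DG (c : ℕ → X) (x y : X) (n : ℕ) : Prop :=
  c 0 = x ∧ c n = y ∧ ∀ i ≤ n, ∀ j ≤ n, M.d (c i) (c j) = |(i : ℝ) - (j : ℝ)|

lemma nonneg (x y : X) : 0 ≤ M.d x y := by
  have h := M.tri x y x
  rw [M.self, M.symm y x] at h
  linarith

lemma exists_DG (x y : X) : ∃ n c, M.DG c x y n := by
  obtain ⟨n, c, h0, h1, h2⟩ := M.geo x y
  exact ⟨n, c, h0, h1, h2⟩

lemma DG.len {c : ℕ → X} {x y : X} {n : ℕ} (h : M.DG c x y n) : (n : ℝ) = M.d x y := by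
  obtain ⟨h0, h1, h2⟩ := h
  have := h2 0 (Nat.zero_le n) n le_rfl
  rw [h0, h1] at this
  rw [this]
  simp

lemma DG.coord0 {c : ℕ → X} {x y : X} {n : ℕ} (h : M.DG c x y n) {i : ℕ} (hi : i ≤ n) :
    M.d x (c i) = i := by
  obtain ⟨h0, h1, h2⟩ := h
  have := h2 0 (Nat.zero_le n) i hi
  rw [h0] at this
  rw [this, abs_of_nonpos (by simp)]
  ring

lemma DG.coord1 {c : ℕ → X} {x y : X} {n : ℕ} (h : M.DG c x y n) {i : ℕ} (hi : i ≤ n) :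
    M.d (c i) y = (n : ℝ) - i := by
  obtain ⟨h0, h1, h2⟩ := h
  have := h2 i hi n le_rfl
  rw [h1] at this
  rw [this, abs_of_nonpos (by simp; exact_mod_cast hi)]
  ring

lemma DG.rev {c : ℕ → X} {x y : X} {n : ℕ} (h : M.DG c x y n) :
    M.DG (fun j => c (n - j)) y x n := by
  obtain ⟨h0, h1, h2⟩ := h
  refine ⟨by simpa using h1, by simpa using h0, ?_⟩
  intro i hi j hj
  have := h2 (n - i) (Nat.sub_le _ _) (n - j) (Nat.sub_le _ _)
  rw [this]
  have hi' : (n - i : ℕ) = (n : ℝ) - i := by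
    push_cast [Nat.cast_sub hi]; ring
  have hj' : (n - j : ℕ) = (n : ℝ) - j := by
    push_cast [Nat.cast_sub hj]; ring
  rw [hi', hj']
  rw [show (n:ℝ) - i - ((n:ℝ) - j) = -((i:ℝ) - j) by ring, abs_neg]

lemma DG.shift {c : ℕ → X} {x y : X} {n : ℕ} (h : M.DG c x y n) (a b : ℕ)
    (hab : a ≤ b) (hb : b ≤ n) : M.DG (fun j => c (a + j)) (c a) (c b) (b - a) := by
  obtain ⟨h0, h1, h2⟩ := h
  refine ⟨by simp, by simp [Nat.add_sub_cancel' hab], ?_⟩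
  intro i hi j hj
  have := h2 (a + i) (by omega) (a + j) (by omega)
  rw [this]
  congr 1
  push_cast
  ring

/-- Doubled Gromov product. -/
def P (x a b : X) : ℝ := M.d a x + M.d x b - M.d a b

lemma P_nonneg (x a b : X) : 0 ≤ M.P x a b := by
  have := M.tri a x b
  unfold P
  linarith

lemma P_le_left (x a b : X) : M.P x a b ≤ 2 * M.d a x := by
  have := M.tri x a b
  have h2 := M.symm x a
  unfold P
  nlinarith [M.nonneg a x]

lemma P_le_right (x a b : X) : M.P x a b ≤ 2 * M.d x b := by
  have := M.tri a b x
  have h2 := M.symm b x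
  unfold P
  nlinarith

lemma P_flip (x a b : X) : M.P x a b = M.P x b a := by
  unfold P
  rw [M.symm a x, M.symm x b, M.symm a b]
  ring

lemma P_sum (x y z : X) : M.P x y z + M.P y x z = 2 * M.d x y := by
  unfold P
  rw [M.symm y x, M.symm x z, M.symm y z]
  ring

variable {δ : ℝ}

/-- Gromov product form of hyperbolicity. -/
lemma hyp_P (hh : IsHyperbolic M.d δ) (w x y z : X) :
    min (M.P w x z) (M.P w z y) - 2 * δ ≤ M.P w x y := by
  have h4 := hh x y z w
  rcases max_cases (M.d x z + M.d y w) (M.d x w + M.d y z) with ⟨heq, _⟩ | ⟨heq, _⟩ <;>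
    rw [heq] at h4
  · have hm := min_le_left (M.P w x z) (M.P w z y)
    have h1 := M.symm w z
    have h2 := M.symm y w
    unfold P at *
    linarith
  · have hm := min_le_right (M.P w x z) (M.P w z y)
    have h1 := M.symm z w
    have h2 := M.symm y w
    have h3 := M.symm z y
    unfold P at *
    linarith


/-- Thin triangles: a point on a geodesic side close to the corresponding
point on another side. -/
lemma thin (hδ : 0 ≤ δ) (hh : IsHyperbolic M.d δ) {x y z : X} {c c' : ℕ → X} {n m : ℕ}
    (hc : M.DG c x y n) (hc' : M.DG c' x z m) {i : ℕ} (hi : i ≤ n)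
    (h2 : 2 * (i : ℝ) ≤ M.P x y z) :
    i ≤ m ∧ M.d (c i) (c' i) ≤ 4 * δ := by
  have hmlen := hc'.len (M := M)
  have hnlen := hc.len (M := M)
  have hPz := M.P_le_right x y z
  have him : i ≤ m := by
    have h' : (i:ℝ) ≤ m := by rw [← hmlen] at hPz; linarith
    exact_mod_cast h'
  refine ⟨him, ?_⟩
  have hA : M.P x (c i) y = 2 * i := by
    have e1 : M.d (c i) x = i := by rw [M.symm]; exact hc.coord0 (M := M) hi
    have e2 : M.d (c i) y = (n:ℝ) - i := hc.coord1 (M := M) hi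
    unfold P
    rw [e1, e2, ← hnlen]
    ring
  have hB : M.P x z (c' i) = 2 * i := by
    have e1 : M.d x (c' i) = i := hc'.coord0 (M := M) him
    have e2 : M.d z (c' i) = (m:ℝ) - i := by rw [M.symm]; exact hc'.coord1 (M := M) him
    have e3 : M.d z x = m := by rw [M.symm, ← hmlen]
    unfold P
    rw [e1, e2, e3]
    ring
  have s1 := M.hyp_P hh x y (c' i) z
  have s2 := M.hyp_P hh x (c i) (c' i) y
  rw [hB] at s1
  rw [hA] at s2
  have hs1 : 2 * (i:ℝ) - 2 * δ ≤ M.P x y (c' i) := by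
    rcases min_le_iff.1 (le_refl (min (M.P x y z) (2 * (i:ℝ)))) with h | h <;> linarith [le_min h2 (le_refl (2*(i:ℝ)))]
  have hs2 : 2 * (i:ℝ) - 4 * δ ≤ M.P x (c i) (c' i) := by
    have : min (2*(i:ℝ)) (M.P x y (c' i)) ≥ 2*(i:ℝ) - 2*δ := le_min (by linarith) hs1
    linarith
  have e1 : M.d (c i) x = i := by rw [M.symm]; exact hc.coord0 (M := M) hi
  have e2 : M.d x (c' i) = i := hc'.coord0 (M := M) him
  unfold P at hs2
  rw [e1, e2] at hs2
  linarith


/-- The logarithmic divergence lemma: a point on a discrete geodesic is within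
`4δ log₂ n + σ` of any `σ`-chain with the same endpoints. -/
lemma loglem (hδ : 0 ≤ δ) (hh : IsHyperbolic M.d δ) {σ : ℝ} (hσ : 0 ≤ σ) :
    ∀ cexp : ℕ, ∀ n : ℕ, n ≤ 2 ^ cexp → ∀ e : ℕ → X,
      (∀ i < n, M.d (e i) (e (i + 1)) ≤ σ) →
      ∀ (ng : ℕ) (c : ℕ → X), M.DG c (e 0) (e n) ng →
      ∀ i ≤ ng, ∃ j ≤ n, M.d (c i) (e j) ≤ 4 * δ * cexp + σ := by
  intro cexp
  induction cexp with
  | zero =>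
    intro n hn e he ng c hc i hi
    refine ⟨0, Nat.zero_le _, ?_⟩
    have h1 : M.d (c i) (e 0) = i := by rw [M.symm]; exact hc.coord0 (M := M) hi
    have h2 : (ng : ℝ) = M.d (e 0) (e n) := hc.len (M := M)
    have h3 : M.d (e 0) (e n) ≤ σ := by
      interval_cases n
      · rw [M.self]; exact hσ
      · exact he 0 one_pos
    have : (i : ℝ) ≤ ng := by exact_mod_cast hi
    rw [h1]
    push_cast
    linarith
  | succ cexp IH =>
    intro n hn e he ng c hc i hi
    by_cases hsmall : n ≤ 2 ^ cexp
    · obtain ⟨j, hj, hd⟩ := IH n hsmall e he ng c hc i hi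
      refine ⟨j, hj, le_trans hd ?_⟩
      have : (cexp : ℝ) ≤ (cexp : ℝ) + 1 := by linarith
      push_cast
      nlinarith
    · have h1 : 1 ≤ 2 ^ cexp := Nat.one_le_two_pow
      have h2 : n ≤ 2 * 2 ^ cexp := by rw [pow_succ] at hn; omega
      set k := (n + 1) / 2 with hk
      have hk1 : k ≤ n := by omega
      have hk2 : k ≤ 2 ^ cexp := by omega
      have hk3 : n - k ≤ 2 ^ cexp := by omega
      obtain ⟨ng₁, c₁, hc₁⟩ := M.exists_DG (e 0) (e k)
      obtain ⟨ng₂, c₂, hc₂⟩ := M.exists_DG (e n) (e k)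
      by_cases hcase : 2 * (i : ℝ) ≤ M.P (e 0) (e n) (e k)
      · obtain ⟨him, hclose⟩ := M.thin hδ hh hc hc₁ hi hcase
        obtain ⟨j, hj, hd⟩ := IH k hk2 e (fun i hik => he i (lt_of_lt_of_le hik hk1))
          ng₁ c₁ hc₁ i him
        refine ⟨j, le_trans hj hk1, ?_⟩
        calc M.d (c i) (e j) ≤ M.d (c i) (c₁ i) + M.d (c₁ i) (e j) := M.tri _ _ _
          _ ≤ 4 * δ + (4 * δ * cexp + σ) := by linarith
          _ ≤ 4 * δ * (cexp + 1 : ℕ) + σ := by push_cast; nlinarith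
      · have hsum := M.P_sum (e 0) (e n) (e k)
        have hnglen : (ng : ℝ) = M.d (e 0) (e n) := hc.len (M := M)
        have hcast : ((ng - i : ℕ) : ℝ) = (ng : ℝ) - i := by
          push_cast [Nat.cast_sub hi]; ring
        have hcase' : 2 * ((ng - i : ℕ) : ℝ) ≤ M.P (e n) (e 0) (e k) := by
          rw [hcast, hnglen]
          push_neg at hcase
          linarith
        have hcrev := hc.rev (M := M)
        obtain ⟨him, hclose⟩ := M.thin hδ hh hcrev hc₂ (Nat.sub_le ng i) hcase'
        rw [show ng - (ng - i) = i by omega] at hclose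
        -- reversed second-half chain
        set e'' : ℕ → X := fun j => e (n - j) with he''
        have hst : ∀ j < n - k, M.d (e'' j) (e'' (j + 1)) ≤ σ := by
          intro j hjk
          have : n - (j+1) + 1 = n - j := by omega
          have hstep := he (n - (j+1)) (by omega)
          rw [this] at hstep
          rw [he'']
          simp only []
          rw [M.symm]
          exact hstep
        have he0 : e'' 0 = e n := by simp [he'']
        have hen : e'' (n - k) = e k := by simp only [he'']; congr 1; omega
        have hc₂' : M.DG c₂ (e'' 0) (e'' (n - k)) ng₂ := by rw [he0, hen]; exact hc₂
        obtain ⟨j, hj, hd⟩ := IH (n - k) hk3 e'' hst ng₂ c₂ hc₂' (ng - i) him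
        refine ⟨n - j, Nat.sub_le _ _, ?_⟩
        have : e'' j = e (n - j) := rfl
        rw [this] at hd
        calc M.d (c i) (e (n - j)) ≤ M.d (c i) (c₂ (ng - i)) + M.d (c₂ (ng - i)) (e (n - j)) := M.tri _ _ _
          _ ≤ 4 * δ + (4 * δ * cexp + σ) := by linarith
          _ ≤ 4 * δ * (cexp + 1 : ℕ) + σ := by push_cast; nlinarith

end CSP

noncomputable def D0 (δ K C : ℝ) : ℝ :=
  1 + 2 * (4 * δ + (K + C + 1)) + (16 * δ) ^ 2 * ((6 * K + 2) + (K * C + 1))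

lemma D0_nonneg {δ K C : ℝ} (hδ : 0 ≤ δ) (hK : 1 ≤ K) (hC : 0 ≤ C) : 0 ≤ D0 δ K C := by
  unfold D0; positivity

namespace CSP

variable {X : Type*} (M : CSP X) {δ : ℝ}

set_option maxHeartbeats 1000000 in
/-- Every point of a discrete geodesic is within `D0 δ K C` of the quasigeodesic
with the same endpoints. -/
lemma geod_near_qg (hδ : 0 ≤ δ) (hh : IsHyperbolic M.d δ) {K C L : ℝ}
    (hK : 1 ≤ K) (hC : 0 ≤ C) (hL : 0 ≤ L) {γ : ℝ → X}
    (hup : ∀ s ∈ Set.Icc (0:ℝ) L, ∀ t ∈ Set.Icc (0:ℝ) L, M.d (γ s) (γ t) ≤ K * |s - t| + C)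
    (hlow : ∀ s ∈ Set.Icc (0:ℝ) L, ∀ t ∈ Set.Icc (0:ℝ) L, |s - t| ≤ K * (M.d (γ s) (γ t) + C))
    {ng : ℕ} {c : ℕ → X} (hc : M.DG c (γ 0) (γ L) ng) :
    ∀ i ≤ ng, ∃ s ∈ Set.Icc (0:ℝ) L, M.d (c i) (γ s) ≤ D0 δ K C := by
  -- the minimal distance from `c i` to the quasigeodesic
  classical
  set m : ℕ → ℕ := fun i => sInf {k : ℕ | ∃ s ∈ Set.Icc (0:ℝ) L, M.d (c i) (γ s) = k} with hm
  have hmem : ∀ i, ∃ s ∈ Set.Icc (0:ℝ) L, M.d (c i) (γ s) = m i := by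
    intro i
    have hne : {k : ℕ | ∃ s ∈ Set.Icc (0:ℝ) L, M.d (c i) (γ s) = k}.Nonempty := by
      obtain ⟨k, hk⟩ := M.nat (c i) (γ 0)
      exact ⟨k, 0, ⟨le_refl _, hL⟩, hk⟩
    exact Nat.sInf_mem hne
  have hmin : ∀ i, ∀ s ∈ Set.Icc (0:ℝ) L, (m i : ℝ) ≤ M.d (c i) (γ s) := by
    intro i s hs
    obtain ⟨k, hk⟩ := M.nat (c i) (γ s)
    have : m i ≤ k := Nat.sInf_le ⟨s, hs, hk⟩
    rw [hk]
    exact_mod_cast this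
  -- it suffices to bound the max
  suffices hsuf : ∀ i ≤ ng, (m i : ℝ) ≤ D0 δ K C by
    intro i hi
    obtain ⟨s, hs, hd⟩ := hmem i
    exact ⟨s, hs, by rw [hd]; exact hsuf i hi⟩
  -- take the max
  obtain ⟨i₀, hi₀mem, hi₀eq⟩ := Finset.exists_mem_eq_sup (Finset.range (ng + 1))
    (by simp : (Finset.range (ng + 1)).Nonempty) m
  have hi₀ : i₀ ≤ ng := by
    have := Finset.mem_range.1 hi₀mem; omega
  set D : ℕ := m i₀ with hD
  have hDsup : ∀ i, i ≤ ng → m i ≤ D := by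
    intro i hi
    have h1 : m i ≤ (Finset.range (ng + 1)).sup m :=
      Finset.le_sup (Finset.mem_range.2 (by omega))
    rw [hi₀eq] at h1
    exact h1
  suffices hsufD : (D : ℝ) ≤ D0 δ K C by
    intro i hi
    exact le_trans (by exact_mod_cast hDsup i hi) hsufD
  -- setup of the detour chain
  set a : ℕ := i₀ - 2 * D with ha
  set b : ℕ := min (i₀ + 2 * D) ng with hb
  have hab : a ≤ i₀ := by omega
  have hbb : i₀ ≤ b := by omega
  have hbng : b ≤ ng := by omega
  have hang : a ≤ ng := by omega
  have hba4 : b - a ≤ 4 * D := by omega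
  obtain ⟨sy, hsy, hdy⟩ := hmem a
  obtain ⟨sz, hsz, hdz⟩ := hmem b
  have hma : m a ≤ D := hDsup a hang
  have hmb : m b ≤ D := hDsup b hbng
  obtain ⟨n1, c1, hc1⟩ := M.exists_DG (c a) (γ sy)
  obtain ⟨n2, c2, hc2⟩ := M.exists_DG (γ sz) (c b)
  have hn1 : (n1 : ℝ) = m a := by rw [hc1.len (M := M), hdy]
  have hn2 : (n2 : ℝ) = m b := by rw [hc2.len (M := M), M.symm, hdz]
  have hn1m : n1 = m a := by exact_mod_cast hn1
  have hn2m : n2 = m b := by exact_mod_cast hn2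
  have hn1D : n1 ≤ D := by omega
  have hn2D : n2 ≤ D := by omega
  set N : ℕ := ⌈|sz - sy|⌉₊ with hN
  set Δ : ℝ := (sz - sy) / N with hΔ
  set nsteps : ℕ := n1 + N + n2 with hnsteps
  set e : ℕ → X := fun j =>
    if j < n1 then c1 j
    else if j ≤ n1 + N then γ (sy + (j - n1 : ℕ) * Δ)
    else c2 (j - (n1 + N)) with he
  have hNd : |sz - sy| ≤ (N : ℝ) := Nat.le_ceil _
  have hmid : ∀ j : ℕ, j ≤ N → (sy + (j : ℝ) * Δ) ∈ Set.Icc (0:ℝ) L := by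
    intro j hj
    rcases Nat.eq_zero_or_pos N with h0 | h0
    · have hj0 : j = 0 := by omega
      rw [hj0]
      simpa using hsy
    · have hNpos : (0:ℝ) < N := by exact_mod_cast h0
      set t : ℝ := (j : ℝ) / N with ht
      have hjΔ : (j : ℝ) * Δ = t * (sz - sy) := by rw [ht, hΔ]; ring
      have ht0 : 0 ≤ t := by positivity
      have ht1 : t ≤ 1 := by
        rw [ht, div_le_one hNpos]
        exact_mod_cast hj
      rw [hjΔ]
      obtain ⟨hy1, hy2⟩ := hsy
      obtain ⟨hz1, hz2⟩ := hsz
      constructor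
      · nlinarith
      · nlinarith
  have hend : sy + (N : ℝ) * Δ = sz := by
    rcases Nat.eq_zero_or_pos N with h0 | h0
    · have hzy : sz = sy := by
        have : |sz - sy| ≤ 0 := by
          rw [h0] at hNd
          simpa using hNd
        have h2 : |sz - sy| = 0 := le_antisymm this (abs_nonneg _)
        have h3 := abs_eq_zero.1 h2
        linarith [sub_eq_zero.1 h3]
      rw [h0, hzy]
      simp
    · have hNne : (N : ℝ) ≠ 0 := by positivity
      rw [hΔ]
      field_simp
      ring
  have hP1 : ∀ j ≤ n1, e j = c1 j := by
    intro j hj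
    rw [he]
    simp only
    rcases lt_or_eq_of_le hj with h | h
    · rw [if_pos h]
    · rw [if_neg (by omega), if_pos (by omega)]
      subst h
      rw [show ((j - j : ℕ) : ℝ) = 0 by simp]
      rw [zero_mul, add_zero]
      · rw [hc1.2.1]
  have hP2 : ∀ j, n1 ≤ j → j ≤ n1 + N → e j = γ (sy + ((j - n1 : ℕ) : ℝ) * Δ) := by
    intro j h1 h2
    rw [he]
    simp only
    rw [if_neg (by omega), if_pos h2]
  have hP3 : ∀ j, n1 + N ≤ j → e j = c2 (j - (n1 + N)) := by
    intro j h1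
    rcases lt_or_eq_of_le h1 with h | h
    · rw [he]
      simp only
      rw [if_neg (by omega), if_neg (by omega)]
    · rw [he]
      simp only
      rw [if_neg (by omega), if_pos (by omega)]
      rw [show ((j - n1 : ℕ) : ℝ) = (N : ℝ) by rw [← h]; push_cast [Nat.add_sub_cancel_left]; ring]
      rw [hend, ← h, Nat.sub_self]
      exact hc2.1.symm
  set σ : ℝ := K + C + 1 with hσdef
  have hσ1 : 1 ≤ σ := by rw [hσdef]; linarith
  have hσ0 : 0 ≤ σ := by linarith
  have hstep : ∀ j, j < nsteps → M.d (e j) (e (j + 1)) ≤ σ := by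
    intro j hj
    by_cases hcase1 : j + 1 ≤ n1
    · rw [hP1 j (by omega), hP1 (j+1) hcase1]
      have := hc1.2.2 j (by omega) (j+1) hcase1
      rw [this]
      rw [show |(j:ℝ) - (j+1:ℕ)| = 1 by push_cast; rw [show (j:ℝ) - (j+1) = -1 by ring]; simp]
      linarith
    · by_cases hcase2 : j + 1 ≤ n1 + N
      · have hjn1 : n1 ≤ j := by omega
        rw [hP2 j hjn1 (by omega), hP2 (j+1) (by omega) hcase2]
        have hu := hmid (j - n1) (by omega)
        have hv := hmid (j + 1 - n1) (by omega)
        have hd := hup _ hu _ hv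
        have habs : |(sy + ((j - n1 : ℕ):ℝ) * Δ) - (sy + ((j + 1 - n1 : ℕ):ℝ) * Δ)| = |Δ| := by
          rw [show ((j + 1 - n1 : ℕ) : ℝ) = ((j - n1 : ℕ):ℝ) + 1 by push_cast [Nat.sub_add_comm hjn1]; ring]
          rw [show (sy + ((j - n1 : ℕ):ℝ) * Δ) - (sy + (((j - n1 : ℕ):ℝ) + 1) * Δ) = -Δ by ring]
          rw [abs_neg]
        have hΔ1 : |Δ| ≤ 1 := by
          have hNpos : 0 < N := by omega
          have hNpos' : (0:ℝ) < N := by exact_mod_cast hNpos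
          rw [hΔ, abs_div, abs_of_pos hNpos', div_le_one hNpos']
          exact hNd
        rw [habs] at hd
        calc M.d _ _ ≤ K * |Δ| + C := hd
          _ ≤ K * 1 + C := by nlinarith
          _ ≤ σ := by rw [hσdef]; linarith
      · have h3 : n1 + N ≤ j := by omega
        rw [hP3 j h3, hP3 (j+1) (by omega)]
        have hr1 : j - (n1 + N) ≤ n2 := by omega
        have hr2 : j + 1 - (n1 + N) ≤ n2 := by omega
        have := hc2.2.2 (j - (n1+N)) hr1 (j + 1 - (n1+N)) hr2
        rw [this]
        rw [show ((j - (n1+N) : ℕ):ℝ) - ((j + 1 - (n1+N) : ℕ):ℝ) = -1 by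
          push_cast [Nat.sub_add_comm h3]; ring]
        rw [abs_neg, abs_one]
        linarith
  have he0 : e 0 = c a := by
    rw [hP1 0 (Nat.zero_le _)]
    exact hc1.1
  have hen : e nsteps = c b := by
    rw [hP3 nsteps (by omega)]
    rw [show nsteps - (n1 + N) = n2 by omega]
    exact hc2.2.1
  -- all chain points are far from c i₀
  have hfar : ∀ j ≤ nsteps, (D : ℝ) ≤ M.d (c i₀) (e j) := by
    intro j hj
    by_cases hcase1 : j ≤ n1
    · rw [hP1 j hcase1]
      by_cases hia : 2 * D ≤ i₀
      · have hda : M.d (c i₀) (c a) = 2 * D := by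
          have := hc.2.2 i₀ (by omega) a (by omega)
          rw [this]
          rw [show (i₀:ℝ) - (a:ℕ) = 2*D by rw [ha]; push_cast [Nat.cast_sub hia]; push_cast; ring]
          rw [abs_of_nonneg (by positivity)]
        have hj1 : M.d (c1 j) (c a) = j := by rw [M.symm]; exact hc1.coord0 (M := M) hcase1
        have htr := M.tri (c i₀) (c1 j) (c a)
        have hjD : (j:ℝ) ≤ D := by
          have : (j:ℝ) ≤ n1 := by exact_mod_cast hcase1
          have h2 : (n1:ℝ) ≤ D := by exact_mod_cast hn1D
          linarith
        linarith [hda ▸ htr]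
      · have ha0 : a = 0 := by omega
        have hma0 : m a = 0 := by
          have hd0 : M.d (c a) (γ 0) = ((0:ℕ):ℝ) := by
            rw [ha0, hc.1, M.self]
            simp
          exact Nat.le_zero.1 (Nat.sInf_le ⟨0, ⟨le_refl _, hL⟩, hd0⟩)
        have hn10 : n1 = 0 := by omega
        have hj0 : j = 0 := by omega
        rw [hj0, hc1.1, ha0, hc.1]
        exact hmin i₀ 0 ⟨le_refl _, hL⟩
    · by_cases hcase2 : j ≤ n1 + N
      · rw [hP2 j (by omega) hcase2]
        exact hmin i₀ _ (hmid (j - n1) (by omega))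
      · have h3 : n1 + N ≤ j := by omega
        rw [hP3 j h3]
        set r := j - (n1 + N) with hr
        have hrn2 : r ≤ n2 := by omega
        by_cases hib : i₀ + 2 * D ≤ ng
        · have hbeq : b = i₀ + 2 * D := by omega
          have hdb : M.d (c i₀) (c b) = 2 * D := by
            have := hc.2.2 i₀ (by omega) b (by omega)
            rw [this]
            rw [show (i₀:ℝ) - (b:ℕ) = -(2*D) by rw [hbeq]; push_cast; ring]
            rw [abs_neg, abs_of_nonneg (by positivity)]
          have hj1 : M.d (c2 r) (c b) = (n2:ℝ) - r := hc2.coord1 (M := M) hrn2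
          have htr := M.tri (c i₀) (c2 r) (c b)
          have hn2D' : (n2:ℝ) ≤ D := by exact_mod_cast hn2D
          have hr0 : (0:ℝ) ≤ r := by positivity
          linarith [hdb ▸ htr]
        · have hbeq : b = ng := by omega
          have hmb0 : m b = 0 := by
            have hd0 : M.d (c b) (γ L) = ((0:ℕ):ℝ) := by
              rw [hbeq, hc.2.1, M.self]
              simp
            exact Nat.le_zero.1 (Nat.sInf_le ⟨L, ⟨hL, le_refl _⟩, hd0⟩)
          have hn20 : n2 = 0 := by omega
          have hr00 : r = 0 := by omega
          rw [hr00, hc2.1]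
          exact hmin i₀ sz hsz
  -- apply the logarithmic lemma
  set cexp : ℕ := Nat.clog 2 nsteps with hcexp
  have hc'' : M.DG (fun j => c (a + j)) (e 0) (e nsteps) (b - a) := by
    rw [he0, hen]
    exact hc.shift (M := M) a b (by omega) hbng
  obtain ⟨j, hjn, hdj⟩ := M.loglem hδ hh hσ0 cexp nsteps
    (Nat.le_pow_clog (by norm_num) _) e hstep (b - a) _ hc'' (i₀ - a) (by omega)
  rw [show a + (i₀ - a) = i₀ by omega] at hdj
  have hDbound : (D : ℝ) ≤ 4 * δ * cexp + σ := le_trans (hfar j hjn) hdj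
  -- the numeric endgame
  by_cases hns : nsteps ≤ 1
  · have : cexp = 0 := Nat.clog_of_right_le_one hns 2
    rw [this] at hDbound
    simp at hDbound
    rw [hσdef] at hDbound
    unfold D0
    nlinarith [mul_nonneg (sq_nonneg (16 * δ)) (show (0:ℝ) ≤ (6*K+2) + (K*C+1) by nlinarith)]
  · push_neg at hns
    set A1 : ℝ := 6 * K + 2 with hA1
    set B1 : ℝ := K * C + 1 with hB1
    set MM : ℝ := A1 * D + B1 with hMM
    have hnsMM : (nsteps : ℝ) ≤ MM := by
      have h1 : (N : ℝ) ≤ |sz - sy| + 1 := by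
        have := Nat.ceil_lt_add_one (abs_nonneg (sz - sy))
        rw [hN]
        linarith
      have h2 : |sz - sy| ≤ K * (M.d (γ sy) (γ sz) + C) := by
        rw [abs_sub_comm]
        exact hlow sy hsy sz hsz
      have h3 : M.d (γ sy) (γ sz) ≤ 6 * D := by
        have t1 : M.d (γ sy) (c a) = (m a : ℝ) := by rw [M.symm]; exact hdy
        have t2 : M.d (c a) (c b) = (b:ℝ) - a := by
          have := hc.2.2 a (by omega) b (by omega)
          rw [this, abs_of_nonpos (by push_cast; exact_mod_cast sub_nonpos.2 (by exact_mod_cast (by omega : a ≤ b) : (a:ℝ) ≤ b))]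
          ring
        have t3 : M.d (c b) (γ sz) = (m b : ℝ) := hdz
        have tri1 := M.tri (γ sy) (c a) (γ sz)
        have tri2 := M.tri (c a) (c b) (γ sz)
        have hma' : ((m a : ℕ) : ℝ) ≤ (D:ℝ) := by exact_mod_cast hma
        have hmb' : ((m b : ℕ) : ℝ) ≤ (D:ℝ) := by exact_mod_cast hmb
        have hba' : (b:ℝ) - a ≤ 4 * D := by
          have : ((b - a : ℕ):ℝ) ≤ ((4 * D : ℕ):ℝ) := by exact_mod_cast hba4
          push_cast [Nat.cast_sub (show a ≤ b by omega)] at this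
          push_cast
          linarith
        rw [t1] at tri1
        rw [t2, t3] at tri2
        linarith
      have hcast : (nsteps : ℝ) = (n1:ℝ) + N + n2 := by rw [hnsteps]; push_cast; ring
      have hn1D' : (n1:ℝ) ≤ D := by exact_mod_cast hn1D
      have hn2D' : (n2:ℝ) ≤ D := by exact_mod_cast hn2D
      rw [hcast, hMM, hA1, hB1]
      nlinarith
    have hclog := clog_le_sqrt hns hnsMM
    have hDle : (D:ℝ) ≤ (16 * δ) * Real.sqrt MM + (4 * δ + σ) := by
      have h4 : 4 * δ * (cexp:ℝ) ≤ 4 * δ * (4 * Real.sqrt MM + 1) := by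
        apply mul_le_mul_of_nonneg_left hclog (by linarith)
      calc (D:ℝ) ≤ 4 * δ * cexp + σ := hDbound
        _ ≤ 4 * δ * (4 * Real.sqrt MM + 1) + σ := by linarith
        _ = (16 * δ) * Real.sqrt MM + (4 * δ + σ) := by ring
    have := solve_sqrt_ineq (D := (D:ℝ)) (E := 16 * δ) (A := A1) (B := B1)
      (F := 4 * δ + σ) (by positivity) (by linarith) (by rw [hA1]; linarith)
      (by rw [hB1]; nlinarith) (by linarith) (by rw [← hMM]; exact hDle)
    unfold D0
    rw [hA1, hB1, hσdef] at this
    linarith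

end CSP

noncomputable def R0 (δ K C : ℝ) : ℝ :=
  D0 δ K C + K * (K * (2 * D0 δ K C + 1 + C)) + C

lemma R0_nonneg {δ K C : ℝ} (hδ : 0 ≤ δ) (hK : 1 ≤ K) (hC : 0 ≤ C) : 0 ≤ R0 δ K C := by
  have h := D0_nonneg hδ hK hC
  unfold R0
  nlinarith [mul_nonneg (mul_nonneg (by linarith : (0:ℝ) ≤ K) (by linarith : (0:ℝ) ≤ K))
    (by linarith : (0:ℝ) ≤ 2 * D0 δ K C + 1 + C)]

namespace CSP

variable {X : Type*} (M : CSP X) {δ : ℝ}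

/-- Tautness of quasigeodesics in a hyperbolic coarse space. -/
lemma qg_taut (hδ : 0 ≤ δ) (hh : IsHyperbolic M.d δ) {K C L : ℝ}
    (hK : 1 ≤ K) (hC : 0 ≤ C) (hL : 0 ≤ L) {γ : ℝ → X}
    (hup : ∀ s ∈ Set.Icc (0:ℝ) L, ∀ t ∈ Set.Icc (0:ℝ) L, M.d (γ s) (γ t) ≤ K * |s - t| + C)
    (hlow : ∀ s ∈ Set.Icc (0:ℝ) L, ∀ t ∈ Set.Icc (0:ℝ) L, |s - t| ≤ K * (M.d (γ s) (γ t) + C)) :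
    ∀ s ∈ Set.Icc (0:ℝ) L,
      M.d (γ 0) (γ s) + M.d (γ s) (γ L) ≤ M.d (γ 0) (γ L) + 2 * R0 δ K C := by
  classical
  intro s hs
  have hD0 := D0_nonneg hδ hK hC
  obtain ⟨ng, c, hc⟩ := M.exists_DG (γ 0) (γ L)
  have hB2 := M.geod_near_qg hδ hh hK hC hL hup hlow hc
  set P : ℕ → Prop := fun i => ∃ u ∈ Set.Icc (0:ℝ) s, M.d (c i) (γ u) ≤ D0 δ K C with hP
  have hP0 : P 0 := by
    refine ⟨0, ⟨le_refl _, hs.1⟩, ?_⟩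
    rw [hc.1, M.self]
    exact hD0
  set i₁ : ℕ := Nat.findGreatest P ng with hi₁def
  have hi₁ng : i₁ ≤ ng := Nat.findGreatest_le ng
  have hPi₁ : P i₁ := Nat.findGreatest_spec (Nat.zero_le ng) hP0
  obtain ⟨u, hu, hdu⟩ := hPi₁
  -- get the second witness
  have hsecond : ∃ (i₂ : ℕ), i₂ ≤ ng ∧ i₁ ≤ i₂ ∧ M.d (c i₁) (c i₂) ≤ 1 ∧
      ∃ v ∈ Set.Icc s L, M.d (c i₂) (γ v) ≤ D0 δ K C := by
    rcases eq_or_lt_of_le hi₁ng with heq | hlt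
    · refine ⟨ng, le_refl _, hi₁ng, ?_, L, ⟨hs.2, le_refl _⟩, ?_⟩
      · rw [heq, M.self]; norm_num
      · rw [hc.2.1, M.self]; exact hD0
    · obtain ⟨v, hv, hdv⟩ := hB2 (i₁ + 1) hlt
      have hnP : ¬ P (i₁ + 1) := Nat.findGreatest_is_greatest (by omega) hlt
      have hvs : s ≤ v := by
        by_contra hcon
        push_neg at hcon
        exact hnP ⟨v, ⟨hv.1, hcon.le⟩, hdv⟩
      refine ⟨i₁ + 1, hlt, by omega, ?_, v, ⟨hvs, hv.2⟩, hdv⟩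
      have := hc.2.2 i₁ (by omega) (i₁ + 1) hlt
      rw [this]
      rw [show |(i₁:ℝ) - ((i₁+1:ℕ):ℝ)| = 1 by push_cast; rw [show (i₁:ℝ) - (i₁+1) = -1 by ring]; simp]
  obtain ⟨i₂, hi₂ng, hi₁₂, hd12, v, hv, hdv⟩ := hsecond
  -- now estimate
  have huL : u ∈ Set.Icc (0:ℝ) L := ⟨hu.1, le_trans hu.2 hs.2⟩
  have hvL : v ∈ Set.Icc (0:ℝ) L := ⟨le_trans hs.1 hv.1, hv.2⟩
  have hduv : M.d (γ u) (γ v) ≤ 2 * D0 δ K C + 1 := by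
    have t1 := M.tri (γ u) (c i₁) (γ v)
    have t2 := M.tri (c i₁) (c i₂) (γ v)
    have hsymm : M.d (γ u) (c i₁) = M.d (c i₁) (γ u) := M.symm _ _
    linarith
  have huv : |u - v| ≤ K * (2 * D0 δ K C + 1 + C) := by
    calc |u - v| ≤ K * (M.d (γ u) (γ v) + C) := hlow u huL v hvL
      _ ≤ K * (2 * D0 δ K C + 1 + C) := by nlinarith
  have hus : |u - s| ≤ |u - v| := by
    rw [abs_of_nonpos (by linarith [hu.2]), abs_of_nonpos (by linarith [hu.2, hv.1])]
    linarith [hv.1]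
  have hvs' : |s - v| ≤ |u - v| := by
    rw [abs_of_nonpos (by linarith [hv.1]), abs_of_nonpos (by linarith [hu.2, hv.1])]
    linarith [hu.2]
  set W : ℝ := K * (K * (2 * D0 δ K C + 1 + C)) + C with hW
  have h1 : M.d (γ u) (γ s) ≤ W := by
    calc M.d (γ u) (γ s) ≤ K * |u - s| + C := hup u huL s hs
      _ ≤ W := by rw [hW]; nlinarith
  have h2 : M.d (γ s) (γ v) ≤ W := by
    calc M.d (γ s) (γ v) ≤ K * |s - v| + C := hup s hs v hvL
      _ ≤ W := by rw [hW]; nlinarith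
  have e1 : M.d (γ 0) (c i₁) = i₁ := hc.coord0 (M := M) hi₁ng
  have e2 : M.d (c i₂) (γ L) = (ng:ℝ) - i₂ := hc.coord1 (M := M) hi₂ng
  have elen : (ng : ℝ) = M.d (γ 0) (γ L) := hc.len (M := M)
  have t1 : M.d (γ 0) (γ s) ≤ (i₁:ℝ) + D0 δ K C + W := by
    have a1 := M.tri (γ 0) (c i₁) (γ s)
    have a2 := M.tri (c i₁) (γ u) (γ s)
    linarith
  have t2 : M.d (γ s) (γ L) ≤ W + D0 δ K C + ((ng:ℝ) - i₂) := by
    have a1 := M.tri (γ s) (c i₂) (γ L)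
    have a2 := M.tri (γ s) (γ v) (c i₂)
    have hsymm : M.d (γ v) (c i₂) = M.d (c i₂) (γ v) := M.symm _ _
    linarith
  have hi : (i₁:ℝ) ≤ i₂ := by exact_mod_cast hi₁₂
  unfold R0
  linarith

end CSP

/-- Coarse intermediate value theorem. -/
lemma coarse_ivt {F : ℝ → ℝ} {L K C tgt : ℝ} (hL : 0 ≤ L) (hK : 0 < K) (hC : 0 ≤ C)
    (hcont : ∀ u ∈ Set.Icc (0:ℝ) L, ∀ v ∈ Set.Icc (0:ℝ) L, |F u - F v| ≤ K * |u - v| + C)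
    (hF0 : F 0 = 0) (htgt0 : 0 ≤ tgt) (htgtL : tgt ≤ F L) :
    ∃ u ∈ Set.Icc (0:ℝ) L, |F u - tgt| ≤ C := by
  set A : Set ℝ := {u | u ∈ Set.Icc (0:ℝ) L ∧ tgt ≤ F u} with hA
  have hLA : L ∈ A := ⟨⟨hL, le_refl _⟩, htgtL⟩
  have hAne : A.Nonempty := ⟨L, hLA⟩
  have hbdd : BddBelow A := ⟨0, fun u hu => hu.1.1⟩
  set u₀ : ℝ := sInf A with hu₀
  have hu₀L : u₀ ≤ L := csInf_le hbdd hLA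
  have hu₀0 : 0 ≤ u₀ := le_csInf hAne (fun u hu => hu.1.1)
  have hu₀I : u₀ ∈ Set.Icc (0:ℝ) L := ⟨hu₀0, hu₀L⟩
  refine ⟨u₀, hu₀I, abs_le.2 ⟨?_, ?_⟩⟩
  · -- tgt - C ≤ F u₀, i.e. -C ≤ F u₀ - tgt
    by_contra hcon
    push_neg at hcon
    set gap : ℝ := tgt - C - F u₀ with hgap
    have hgap0 : 0 < gap := by rw [hgap]; linarith
    set ε : ℝ := gap / (2 * K) with hε
    have hε0 : 0 < ε := by positivity
    obtain ⟨w, hw, hw2⟩ := exists_lt_of_csInf_lt hAne (show sInf A < u₀ + ε by linarith)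
    have hwI := hw.1
    have hwu : u₀ ≤ w := csInf_le hbdd hw
    have hd := hcont u₀ hu₀I w hwI
    have habs : |u₀ - w| ≤ ε := by
      rw [abs_of_nonpos (show u₀ - w ≤ 0 by linarith)]
      linarith
    have : F w - F u₀ ≤ K * ε + C := by
      have h5 : F w - F u₀ ≤ |F u₀ - F w| := by rw [abs_sub_comm]; exact le_abs_self _
      nlinarith [mul_le_mul_of_nonneg_left habs hK.le]
    have hKε : K * ε = gap / 2 := by rw [hε]; field_simp
    have := hw.2
    nlinarith
  · -- F u₀ - tgt ≤ C
    rcases eq_or_lt_of_le hu₀0 with heq | hlt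
    · rw [← heq, hF0]; linarith
    · by_contra hcon
      push_neg at hcon
      set gap : ℝ := F u₀ - tgt - C with hgap
      have hgap0 : 0 < gap := by rw [hgap]; linarith
      set ε : ℝ := min u₀ (gap / (2 * K)) with hε
      have hε0 : 0 < ε := lt_min hlt (by positivity)
      set v : ℝ := u₀ - ε with hv
      have hvI : v ∈ Set.Icc (0:ℝ) L := by
        constructor
        · rw [hv]; have : ε ≤ u₀ := min_le_left _ _; linarith
        · rw [hv]; linarith
      have hvA : v ∉ A := by
        intro hmem
        have := csInf_le hbdd hmem
        rw [hv] at this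
        linarith
      have hvF : F v < tgt := by
        by_contra hcon2
        push_neg at hcon2
        exact hvA ⟨hvI, hcon2⟩
      have hd := hcont u₀ hu₀I v hvI
      have habs : |u₀ - v| = ε := by rw [hv]; rw [show u₀ - (u₀ - ε) = ε by ring]; exact abs_of_pos hε0
      have h2 : F u₀ - F v ≤ K * ε + C := by
        have := le_trans (le_abs_self (F u₀ - F v)) hd
        rw [habs] at this
        linarith
      have hKε : K * ε ≤ gap / 2 := by
        have : ε ≤ gap / (2 * K) := min_le_right _ _
        calc K * ε ≤ K * (gap / (2*K)) := by nlinarith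
          _ = gap / 2 := by field_simp
      nlinarith

namespace CSP

variable {X : Type*} (M : CSP X) {δ : ℝ}

lemma d_lip (a x y : X) : |M.d a x - M.d a y| ≤ M.d x y := by
  rw [abs_le]
  constructor
  · have := M.tri a x y
    linarith
  · have := M.tri a y x
    have h2 := M.symm y x
    linarith

/-- Two taut points with matched offsets are close. -/
lemma close_points (hh : IsHyperbolic M.d δ) {A B z z' : X} {R : ℝ}
    (h1 : M.d A z + M.d z B ≤ M.d A B + 2 * R)
    (h2 : M.d A z' + M.d z' B ≤ M.d A B + 2 * R) :
    M.d z z' ≤ 2 * R + 2 * δ + |M.d A z - M.d A z'| := by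
  have h4 := hh A B z z'
  have e1 := M.symm B z
  have e2 := M.symm B z'
  have e3 := le_abs_self (M.d A z - M.d A z')
  have e4 := neg_abs_le (M.d A z - M.d A z')
  rcases max_cases (M.d A z + M.d B z') (M.d A z' + M.d B z) with ⟨heq, _⟩ | ⟨heq, _⟩ <;>
    rw [heq] at h4 <;> linarith

end CSP

set_option maxHeartbeats 1000000 in
theorem map_between_cores
    (δ K C : ℝ) (hδ : 0 ≤ δ) (hK : 1 ≤ K) (hC : 0 ≤ C) :
    ∃ K' C' : ℝ, 1 ≤ K' ∧ 0 ≤ C' ∧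
      ∀ (G : Type) [Group G] (S : Set G), S.Finite → Subgroup.closure S = ⊤ →
        IsHyperbolic (wordDist S) δ →
        ∀ (H₁ H₂ : Subgroup G) (h₁₂ : H₁ ≤ H₂),
        ∀ (T₁ : Type) [MetricSpace T₁] (T₂ : Type) [MetricSpace T₂],
          IsRTree T₁ → IsRTree T₂ →
          ∀ (t₁ : T₁) (t₂ : T₂) (a₁ : H₁ →* (T₁ ≃ᵢ T₁)) (a₂ : H₂ →* (T₂ ≃ᵢ T₂)),
            (∀ (h : H₁) (t : T₁), a₁ h t = t → h = 1) →
            (∀ (h : H₂) (t : T₂), a₂ h t = t → h = 1) →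
            ∀ (f₁ : T₁ → G) (f₂ : T₂ → G),
              IsQIE (fun x y : T₁ => dist x y) (wordDist S) f₁ K C →
              IsQIE (fun x y : T₂ => dist x y) (wordDist S) f₂ K C →
              (∀ (h : H₁) (t : T₁), f₁ (a₁ h t) = (h : G) * f₁ t) →
              (∀ (h : H₂) (t : T₂), f₂ (a₂ h t) = (h : G) * f₂ t) →
              f₁ t₁ = 1 → f₂ t₂ = 1 →
              (∀ x : T₁, LiesOnOrbitGeodesic a₁ t₁ x) →
              ∃ ψ : T₁ → T₂,
                IsQIE (fun x y : T₁ => dist x y) (fun x y : T₂ => dist x y) ψ K' C' ∧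
                ∀ (h : H₁) (x : T₁), ψ (a₁ h x) = a₂ (Subgroup.inclusion h₁₂ h) (ψ x) := by
  classical
  have hR0 : 0 ≤ R0 δ K C := R0_nonneg hδ hK hC
  set DA : ℝ := 4 * R0 δ K C + 2 * δ + C with hDAdef
  have hDA : 0 ≤ DA := by rw [hDAdef]; linarith
  have hK0 : (0:ℝ) < K := by linarith
  clear_value DA
  refine ⟨K ^ 2, (K + 1) * (2 * C + 2 * DA), by nlinarith, by nlinarith, ?_⟩
  intro G _ S hSfin hgen hhyp H₁ H₂ h₁₂ T₁ _ T₂ _ hT₁ hT₂ t₁ t₂ a₁ a₂ hfree₁ hfree₂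
    f₁ f₂ hq₁ hq₂ heq₁ heq₂ hf₁ hf₂ horb
  set M : CSP G := ⟨wordDist S, wd_symm hgen, fun x y z => wd_tri hgen x y z,
    wd_self, wd_nat, fun x y => by
      obtain ⟨n, c, h0, h1, _, h2⟩ := wd_geod hgen x y
      exact ⟨n, c, h0, h1, h2⟩⟩ with hM
  have hMd : M.d = wordDist S := rfl
  have hh : IsHyperbolic M.d δ := by rw [hMd]; exact hhyp
  have hwnn : ∀ g h : G, 0 ≤ wordDist S g h := wd_nonneg
  -- auxiliary: composing a geodesic segment with a (K,C)-QIE gives QG bounds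
  -- main estimate: every `f₁ x` is `DA`-close to the image of `f₂`
  have MAIN : ∀ x : T₁, ∃ y : T₂, wordDist S (f₁ x) (f₂ y) ≤ DA := by
    intro x
    obtain ⟨g, g', γ, hseg, s, hsI, hγs⟩ := horb x
    obtain ⟨hγ0, hγL, hiso⟩ := hseg
    set L₁ : ℝ := dist (a₁ g t₁) (a₁ g' t₁) with hL₁def
    have hL₁ : 0 ≤ L₁ := dist_nonneg
    have hup₁ : ∀ u ∈ Set.Icc (0:ℝ) L₁, ∀ v ∈ Set.Icc (0:ℝ) L₁,
        M.d (f₁ (γ u)) (f₁ (γ v)) ≤ K * |u - v| + C := by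
      intro u hu v hv
      have h2 : wordDist S (f₁ (γ u)) (f₁ (γ v)) ≤ K * dist (γ u) (γ v) + C :=
        (hq₁ (γ u) (γ v)).2
      rw [hiso u v hu hv] at h2
      exact h2
    have hlow₁ : ∀ u ∈ Set.Icc (0:ℝ) L₁, ∀ v ∈ Set.Icc (0:ℝ) L₁,
        |u - v| ≤ K * (M.d (f₁ (γ u)) (f₁ (γ v)) + C) := by
      intro u hu v hv
      have h2 : (1/K) * dist (γ u) (γ v) - C ≤ wordDist S (f₁ (γ u)) (f₁ (γ v)) :=
        (hq₁ (γ u) (γ v)).1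
      rw [hiso u v hu hv] at h2
      have h3 : (1/K) * |u - v| ≤ M.d (f₁ (γ u)) (f₁ (γ v)) + C := by
        have : M.d (f₁ (γ u)) (f₁ (γ v)) = wordDist S (f₁ (γ u)) (f₁ (γ v)) := rfl
        rw [this]; linarith
      have h4 := mul_le_mul_of_nonneg_left h3 hK0.le
      have h5 : K * ((1/K) * |u - v|) = |u - v| := by field_simp
      linarith
    have htaut₁ := M.qg_taut hδ hh hK hC hL₁ (γ := fun u => f₁ (γ u)) hup₁ hlow₁ s hsI
    have hend0 : f₁ (γ 0) = (g : G) := by rw [hγ0, heq₁, hf₁, mul_one]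
    have hendL : f₁ (γ L₁) = (g' : G) := by rw [hγL, heq₁, hf₁, mul_one]
    rw [hend0, hendL, hγs] at htaut₁
    -- second tree
    set p' : T₂ := a₂ (Subgroup.inclusion h₁₂ g) t₂ with hp'
    set q' : T₂ := a₂ (Subgroup.inclusion h₁₂ g') t₂ with hq'
    obtain ⟨γ', hγ'0, hγ'L, hiso'⟩ := hT₂.1 p' q'
    set L₂ : ℝ := dist p' q' with hL₂def
    have hL₂ : 0 ≤ L₂ := dist_nonneg
    have hup₂ : ∀ u ∈ Set.Icc (0:ℝ) L₂, ∀ v ∈ Set.Icc (0:ℝ) L₂,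
        M.d (f₂ (γ' u)) (f₂ (γ' v)) ≤ K * |u - v| + C := by
      intro u hu v hv
      have h2 : wordDist S (f₂ (γ' u)) (f₂ (γ' v)) ≤ K * dist (γ' u) (γ' v) + C :=
        (hq₂ (γ' u) (γ' v)).2
      rw [hiso' u v hu hv] at h2
      exact h2
    have hlow₂ : ∀ u ∈ Set.Icc (0:ℝ) L₂, ∀ v ∈ Set.Icc (0:ℝ) L₂,
        |u - v| ≤ K * (M.d (f₂ (γ' u)) (f₂ (γ' v)) + C) := by
      intro u hu v hv
      have h2 : (1/K) * dist (γ' u) (γ' v) - C ≤ wordDist S (f₂ (γ' u)) (f₂ (γ' v)) :=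
        (hq₂ (γ' u) (γ' v)).1
      rw [hiso' u v hu hv] at h2
      have h3 : (1/K) * |u - v| ≤ M.d (f₂ (γ' u)) (f₂ (γ' v)) + C := by
        have : M.d (f₂ (γ' u)) (f₂ (γ' v)) = wordDist S (f₂ (γ' u)) (f₂ (γ' v)) := rfl
        rw [this]; linarith
      have h4 := mul_le_mul_of_nonneg_left h3 hK0.le
      have h5 : K * ((1/K) * |u - v|) = |u - v| := by field_simp
      linarith
    have hend0' : f₂ (γ' 0) = (g : G) := by
      rw [hγ'0, hp', heq₂, hf₂, mul_one, Subgroup.coe_inclusion]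
    have hendL' : f₂ (γ' L₂) = (g' : G) := by
      rw [hγ'L, hq', heq₂, hf₂, mul_one, Subgroup.coe_inclusion]
    have htaut₂ := M.qg_taut hδ hh hK hC hL₂ (γ := fun u => f₂ (γ' u)) hup₂ hlow₂
    rw [hend0', hendL'] at htaut₂
    -- coarse intermediate value theorem
    set F : ℝ → ℝ := fun u => M.d ((g : G) : G) (f₂ (γ' u)) with hF
    have hcont : ∀ u ∈ Set.Icc (0:ℝ) L₂, ∀ v ∈ Set.Icc (0:ℝ) L₂,
        |F u - F v| ≤ K * |u - v| + C := by
      intro u hu v hv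
      exact le_trans (M.d_lip _ _ _) (hup₂ u hu v hv)
    have hF0 : F 0 = 0 := by rw [hF]; simp only []; rw [hend0']; exact M.self _
    set aa : ℝ := M.d ((g:G) : G) (f₁ x) with haa
    set Dab : ℝ := M.d ((g:G) : G) ((g':G) : G) with hDab
    set tgt : ℝ := min aa Dab with htgt
    have htgt0 : 0 ≤ tgt := le_min (hwnn _ _) (hwnn _ _)
    have htgtL : tgt ≤ F L₂ := by
      rw [hF]; simp only []; rw [hendL']
      exact min_le_right _ _
    obtain ⟨u₀, hu₀I, hu₀⟩ := coarse_ivt hL₂ hK0 hC hcont hF0 htgt0 htgtL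
    refine ⟨γ' u₀, ?_⟩
    have ht2 := htaut₂ u₀ hu₀I
    have hcp := M.close_points hh (A := ((g:G):G)) (B := ((g':G):G)) (z := f₁ x)
      (z' := f₂ (γ' u₀)) (R := R0 δ K C) htaut₁ ht2
    have hb0 : 0 ≤ M.d (f₁ x) ((g':G) : G) := hMd ▸ hwnn _ _
    have haD : aa ≤ Dab + 2 * R0 δ K C := by rw [haa, hDab]; linarith [htaut₁]
    have habs : |M.d ((g:G):G) (f₁ x) - M.d ((g:G):G) (f₂ (γ' u₀))| ≤ 2 * R0 δ K C + C := by
      have h1 : |F u₀ - tgt| ≤ C := hu₀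
      rw [abs_le] at h1
      have h2 : tgt ≤ aa := min_le_left _ _
      have h3 : aa - 2 * R0 δ K C ≤ tgt := by
        rcases min_cases aa Dab with ⟨hmeq, _⟩ | ⟨hmeq, _⟩ <;> rw [htgt, hmeq] <;> linarith
      have h4 : F u₀ = M.d ((g:G):G) (f₂ (γ' u₀)) := rfl
      rw [abs_le]
      constructor <;> rw [← haa, ← h4] <;> linarith
    have hfinal : M.d (f₁ x) (f₂ (γ' u₀)) ≤ DA := by
      rw [hDAdef]
      linarith [hcp, habs]
    rw [← hMd]
    exact hfinal
  -- orbit machinery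
  have hone : ∀ t : T₁, a₁ 1 t = t := fun t => by rw [map_one]; rfl
  have hmul : ∀ (h k : H₁) (t : T₁), a₁ (h * k) t = a₁ h (a₁ k t) := fun h k t => by
    rw [map_mul]; rfl
  have hmul₂ : ∀ (h k : H₂) (t : T₂), a₂ (h * k) t = a₂ h (a₂ k t) := fun h k t => by
    rw [map_mul]; rfl
  set r : Setoid T₁ := ⟨fun x y => ∃ h : H₁, a₁ h x = y,
    ⟨fun x => ⟨1, hone x⟩,
     fun {x y} ⟨h, hxy⟩ => ⟨h⁻¹, by rw [← hxy, ← hmul, inv_mul_cancel, hone]⟩,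
     fun {x y z} ⟨h, hxy⟩ ⟨k, hyz⟩ => ⟨k * h, by rw [hmul, hxy, hyz]⟩⟩⟩ with hr
  set rep : T₁ → T₁ := fun x => (Quotient.mk r x).out with hrepdef
  have hrep_rel : ∀ x, ∃ h : H₁, a₁ h (rep x) = x := fun x =>
    Quotient.exact (Quotient.out_eq (Quotient.mk r x))
  have hrep_inv : ∀ (h : H₁) (x : T₁), rep (a₁ h x) = rep x := by
    intro h x
    rw [hrepdef]
    simp only []
    congr 1
    apply Quotient.sound
    exact ⟨h⁻¹, by rw [← hmul, inv_mul_cancel, hone]⟩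
  choose sel hsel using hrep_rel
  have hsel_unique : ∀ (x : T₁) (h : H₁), a₁ h (rep x) = x → h = sel x := by
    intro x h hhx
    have e1 : a₁ h (rep x) = a₁ (sel x) (rep x) := by rw [hhx, hsel x]
    have h1 : a₁ ((sel x)⁻¹ * h) (rep x) = rep x := by
      rw [hmul, e1, ← hmul, inv_mul_cancel, hone]
    have := hfree₁ _ _ h1
    rwa [inv_mul_eq_one, eq_comm] at this
  choose Ψ hΨ using MAIN
  set ψ : T₁ → T₂ := fun x => a₂ (Subgroup.inclusion h₁₂ (sel x)) (Ψ (rep x)) with hψ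
  have hequiv : ∀ (h : H₁) (x : T₁), ψ (a₁ h x) = a₂ (Subgroup.inclusion h₁₂ h) (ψ x) := by
    intro h x
    have h1 : rep (a₁ h x) = rep x := hrep_inv h x
    have h2 : sel (a₁ h x) = h * sel x := by
      symm
      apply hsel_unique
      rw [h1, hmul, hsel x]
    rw [hψ]
    simp only []
    rw [h2, h1, map_mul, map_mul]
    rfl
  have hcent : ∀ x : T₁, wordDist S (f₁ x) (f₂ (ψ x)) ≤ DA := by
    intro x
    have h1 : f₂ (ψ x) = ((sel x : H₁) : G) * f₂ (Ψ (rep x)) := by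
      rw [hψ]
      simp only []
      rw [heq₂, Subgroup.coe_inclusion]
    have h2 : f₁ x = ((sel x : H₁) : G) * f₁ (rep x) := by
      conv_lhs => rw [← hsel x]
      rw [heq₁]
    rw [h1, h2, wd_left_inv]
    exact hΨ (rep x)
  refine ⟨ψ, ?_, hequiv⟩
  intro x y
  have hsym : ∀ u v : G, wordDist S u v = wordDist S v u := wd_symm hgen
  have htri : ∀ u v w : G, wordDist S u w ≤ wordDist S u v + wordDist S v w :=
    fun u v w => wd_tri hgen u v w
  have hcx := hcent x
  have hcy := hcent y
  have hfup := (hq₁ x y).2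
  have hflow := (hq₁ x y).1
  have hgup := (hq₂ (ψ x) (ψ y)).2
  have hglow := (hq₂ (ψ x) (ψ y)).1
  have hDnn : (0:ℝ) ≤ dist (ψ x) (ψ y) := dist_nonneg
  have hdnn : (0:ℝ) ≤ dist x y := dist_nonneg
  have hw1 : wordDist S (f₂ (ψ x)) (f₂ (ψ y)) ≤ 2 * DA + (K * dist x y + C) := by
    have t1 := htri (f₂ (ψ x)) (f₁ x) (f₂ (ψ y))
    have t2 := htri (f₁ x) (f₁ y) (f₂ (ψ y))
    have e1 := hsym (f₂ (ψ x)) (f₁ x)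
    linarith
  have hw2 : wordDist S (f₁ x) (f₁ y) ≤ 2 * DA + (K * dist (ψ x) (ψ y) + C) := by
    have t1 := htri (f₁ x) (f₂ (ψ x)) (f₁ y)
    have t2 := htri (f₂ (ψ x)) (f₂ (ψ y)) (f₁ y)
    have e1 := hsym (f₂ (ψ y)) (f₁ y)
    linarith
  constructor
  · -- lower bound
    show 1 / K ^ 2 * dist x y - (K + 1) * (2 * C + 2 * DA) ≤ dist (ψ x) (ψ y)
    have h1 : (1/K) * dist x y - C ≤ 2 * DA + (K * dist (ψ x) (ψ y) + C) :=
      le_trans hflow hw2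
    have h2 : (1/K) * ((1/K) * dist x y - 2 * C - 2 * DA) ≤ (1/K) * (K * dist (ψ x) (ψ y)) := by
      apply mul_le_mul_of_nonneg_left _ (one_div_nonneg.2 hK0.le)
      linarith
    have h3 : (1/K) * (K * dist (ψ x) (ψ y)) = dist (ψ x) (ψ y) := by field_simp
    have h4 : (1/K) * ((1/K) * dist x y) = (1 / K^2) * dist x y := by
      ring
    have h5 : (1/K) * (2 * C + 2 * DA) ≤ 2 * C + 2 * DA := by
      have hinv : (1/K) ≤ 1 := by rw [div_le_one hK0]; linarith
      nlinarith
    have h6 : (1 / K^2) * dist x y - (2 * C + 2 * DA) ≤ dist (ψ x) (ψ y) := by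
      rw [← h3]
      calc (1 / K^2) * dist x y - (2 * C + 2 * DA)
          ≤ (1/K) * ((1/K) * dist x y) - (1/K) * (2 * C + 2 * DA) := by
            rw [h4]; linarith
        _ = (1/K) * ((1/K) * dist x y - 2 * C - 2 * DA) := by ring
        _ ≤ (1/K) * (K * dist (ψ x) (ψ y)) := h2
    have h7 : (2 * C + 2 * DA) ≤ (K + 1) * (2 * C + 2 * DA) := by nlinarith
    linarith
  · -- upper bound
    show dist (ψ x) (ψ y) ≤ K ^ 2 * dist x y + (K + 1) * (2 * C + 2 * DA)
    have h1 : (1/K) * dist (ψ x) (ψ y) - C ≤ 2 * DA + (K * dist x y + C) :=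
      le_trans hglow hw1
    have h2 : (1/K) * dist (ψ x) (ψ y) ≤ K * dist x y + 2 * C + 2 * DA := by linarith
    have h3 := mul_le_mul_of_nonneg_left h2 hK0.le
    have h4 : K * ((1/K) * dist (ψ x) (ψ y)) = dist (ψ x) (ψ y) := by field_simp
    have h5 : K * (K * dist x y + 2 * C + 2 * DA) = K^2 * dist x y + K * (2*C + 2*DA) := by
      ring
    have h6 : K * (2*C+2*DA) ≤ (K+1) * (2*C+2*DA) := by nlinarith
    linarith
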